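/- arXiv:math-ph/0311053 — 7 statements merged into one kernel-verified Lean document; each statement's English description precedes it below -/
import Mathlib

section
/- If (w, c, α²) is a non-trivial solution of the Taylor–Goldstein eigenvalue problem with c_i > 0, then multiplying the equation by the complex conjugate w*, integrating over [z₁, z₂], and integrating by parts using the boundary conditions yields the complex integral identity ∫_{z₁}^{z₂} (|w′|² + α²|w|²) dz + ∫_{z₁}^{z₂} ( U″/(U − c) − gβ/(U − c)² ) |w|² dz = 0. -/
open Set

lemma tg_conj_mul_self (a : ℂ) : (starRingEnd ℂ) a * a = ((‖a‖ ^ 2 : ℝ) : ℂ) := by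
  rw [mul_comm, Complex.mul_conj]
  simp [Complex.normSq_eq_norm_sq]

/-- Lemma 3.1 step (3.4): multiplying the Taylor–Goldstein equation by `w*`,
integrating over `[z₁, z₂]` and integrating by parts yields
`∫ (|w′|² + α²|w|²) + ∫ (U″/(U−c) − gβ/(U−c)²)|w|² = 0`. -/
theorem taylor_goldstein_complex_identity
    (z₁ z₂ : ℝ) (hz : z₁ < z₂)
    (g : ℝ) (hg : 0 < g)
    (U U' U'' : ℝ → ℝ)
    (hU : ∀ z ∈ Icc z₁ z₂, HasDerivAt U (U' z) z)
    (hU' : ∀ z ∈ Icc z₁ z₂, HasDerivAt U' (U'' z) z)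
    (hU'' : ContinuousOn U'' (Icc z₁ z₂))
    (β : ℝ → ℝ) (hβc : ContinuousOn β (Icc z₁ z₂))
    (hβ : ∀ z ∈ Icc z₁ z₂, 0 ≤ β z)
    (α : ℝ) (hα : 0 < α)
    (c : ℂ) (hci : 0 < c.im)
    (w w' w'' : ℝ → ℂ)
    (hw : ∀ z ∈ Icc z₁ z₂, HasDerivAt w (w' z) z)
    (hw' : ∀ z ∈ Icc z₁ z₂, HasDerivAt w' (w'' z) z)
    (hw'' : ContinuousOn w'' (Icc z₁ z₂))
    (hw0 : ∃ z ∈ Icc z₁ z₂, w z ≠ 0)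
    (hbc₁ : w z₁ = 0) (hbc₂ : w z₂ = 0)
    (heq : ∀ z ∈ Icc z₁ z₂,
      w'' z - (α : ℂ) ^ 2 * w z - ((U'' z : ℂ) / ((U z : ℂ) - c)) * w z
        + ((g : ℂ) * (β z : ℂ) / ((U z : ℂ) - c) ^ 2) * w z = 0) :
    (∫ z in z₁..z₂, ((‖w' z‖ ^ 2 + α ^ 2 * ‖w z‖ ^ 2 : ℝ) : ℂ))
      + ∫ z in z₁..z₂,
          ((U'' z : ℂ) / ((U z : ℂ) - c)
            - (g : ℂ) * (β z : ℂ) / ((U z : ℂ) - c) ^ 2) * ((‖w z‖ ^ 2 : ℝ) : ℂ)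
      = 0 := by
  have hIcc : uIcc z₁ z₂ = Icc z₁ z₂ := uIcc_of_le hz.le
  set f1 : ℝ → ℂ := fun z => ((‖w' z‖ ^ 2 + α ^ 2 * ‖w z‖ ^ 2 : ℝ) : ℂ) with hf1
  set f2 : ℝ → ℂ := fun z =>
    ((U'' z : ℂ) / ((U z : ℂ) - c)
      - (g : ℂ) * (β z : ℂ) / ((U z : ℂ) - c) ^ 2) * ((‖w z‖ ^ 2 : ℝ) : ℂ) with hf2
  -- denominator nonvanishing
  have hden : ∀ z ∈ Icc z₁ z₂, (U z : ℂ) - c ≠ 0 := by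
    intro z _ h
    have : ((U z : ℂ) - c).im = 0 := by rw [h]; simp
    simp only [Complex.sub_im, Complex.ofReal_im] at this
    linarith
  -- pointwise identity
  have hkey : ∀ z ∈ Icc z₁ z₂,
      (starRingEnd ℂ) (w' z) * w' z + (starRingEnd ℂ) (w z) * w'' z = f1 z + f2 z := by
    intro z hzm
    have h2 : w'' z = (α : ℂ) ^ 2 * w z + ((U'' z : ℂ) / ((U z : ℂ) - c)) * w z
        - ((g : ℂ) * (β z : ℂ) / ((U z : ℂ) - c) ^ 2) * w z := by
      linear_combination heq z hzm
    rw [h2, hf1, hf2]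
    push_cast
    rw [show ((‖w' z‖ : ℂ) ^ 2 + (α : ℂ) ^ 2 * (‖w z‖ : ℂ) ^ 2)
        = (starRingEnd ℂ) (w' z) * w' z + (α : ℂ) ^ 2 * ((starRingEnd ℂ) (w z) * w z) by
      rw [tg_conj_mul_self, tg_conj_mul_self]; push_cast; ring]
    rw [show ((‖w z‖ : ℂ) ^ 2) = (starRingEnd ℂ) (w z) * w z by
      rw [tg_conj_mul_self]; push_cast; ring]
    ring
  -- continuity
  have hwc : ContinuousOn w (Icc z₁ z₂) :=
    fun z hzm => (hw z hzm).continuousAt.continuousWithinAt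
  have hw'c : ContinuousOn w' (Icc z₁ z₂) :=
    fun z hzm => (hw' z hzm).continuousAt.continuousWithinAt
  have hUc : ContinuousOn U (Icc z₁ z₂) :=
    fun z hzm => (hU z hzm).continuousAt.continuousWithinAt
  have hdenc : ContinuousOn (fun z => (U z : ℂ) - c) (Icc z₁ z₂) :=
    (Complex.continuous_ofReal.comp_continuousOn hUc).sub continuousOn_const
  have hc1 : ContinuousOn f1 (Icc z₁ z₂) := by
    apply Complex.continuous_ofReal.comp_continuousOn
    exact ((hw'c.norm.pow 2).add (continuousOn_const.mul (hwc.norm.pow 2)))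
  have hc2 : ContinuousOn f2 (Icc z₁ z₂) := by
    apply ContinuousOn.mul
    · apply ContinuousOn.sub
      · exact (Complex.continuous_ofReal.comp_continuousOn hU'').div hdenc hden
      · exact (continuousOn_const.mul
          (Complex.continuous_ofReal.comp_continuousOn hβc)).div (hdenc.pow 2)
          (fun z hzm => pow_ne_zero 2 (hden z hzm))
    · exact Complex.continuous_ofReal.comp_continuousOn (hwc.norm.pow 2)
  have hi1 : IntervalIntegrable f1 MeasureTheory.volume z₁ z₂ := by
    apply ContinuousOn.intervalIntegrable; rwa [hIcc]
  have hi2 : IntervalIntegrable f2 MeasureTheory.volume z₁ z₂ := by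
    apply ContinuousOn.intervalIntegrable; rwa [hIcc]
  -- integration by parts
  have hF : ∀ z ∈ uIcc z₁ z₂,
      HasDerivAt (fun z => (starRingEnd ℂ) (w z) * w' z) (f1 z + f2 z) z := by
    intro z hzm
    rw [hIcc] at hzm
    have := ((hw z hzm).star.mul (hw' z hzm))
    simp only [Complex.star_def] at this
    rwa [hkey z hzm] at this
  have hint := intervalIntegral.integral_eq_sub_of_hasDerivAt hF (hi1.add hi2)
  rw [hbc₁, hbc₂] at hint
  simp only [map_zero, zero_mul, sub_zero] at hint
  rw [intervalIntegral.integral_add hi1 hi2] at hint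
  exact hint
end

section
/- If (w, c, α²) is a non-trivial solution of the Taylor–Goldstein eigenvalue problem with c_i > 0, then the real-part integral relation ∫_{z₁}^{z₂} (|w′|² + α²|w|²) dz + ∫_{z₁}^{z₂} U″(U − c_r)/((U − c_r)² + c_i²) |w|² dz − ∫_{z₁}^{z₂} gβ((U − c_r)² − c_i²)/((U − c_r)² + c_i²)² |w|² dz = 0 holds (Lemma 3.1, relation (3.1)). -/
open Set MeasureTheory intervalIntegral

lemma re_real_div (r : ℝ) (x : ℂ) : ((r:ℂ)/x).re = r * x.re / Complex.normSq x := by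
  simp [Complex.div_re]

lemma re_real_div_sq (r : ℝ) (x : ℂ) :
    ((r:ℂ)/x^2).re = r * (x.re^2 - x.im^2) / (Complex.normSq x)^2 := by
  have : Complex.normSq (x^2) = (Complex.normSq x)^2 := by simp [map_pow]
  simp [Complex.div_re, this, pow_two, Complex.mul_re]

/-- Lemma 3.1, relation (3.1): the real part of the first integral identity for the
Taylor–Goldstein eigenvalue problem. -/
theorem taylor_goldstein_real_part_relation
    (z₁ z₂ : ℝ) (hz : z₁ < z₂)
    (g : ℝ) (hg : 0 < g)
    (U U' U'' : ℝ → ℝ)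
    (hU : ∀ z ∈ Icc z₁ z₂, HasDerivAt U (U' z) z)
    (hU' : ∀ z ∈ Icc z₁ z₂, HasDerivAt U' (U'' z) z)
    (hU'' : ContinuousOn U'' (Icc z₁ z₂))
    (β : ℝ → ℝ) (hβc : ContinuousOn β (Icc z₁ z₂))
    (hβ : ∀ z ∈ Icc z₁ z₂, 0 ≤ β z)
    (α : ℝ) (hα : 0 < α)
    (c : ℂ) (hci : 0 < c.im)
    (w w' w'' : ℝ → ℂ)
    (hw : ∀ z ∈ Icc z₁ z₂, HasDerivAt w (w' z) z)
    (hw' : ∀ z ∈ Icc z₁ z₂, HasDerivAt w' (w'' z) z)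
    (hw'' : ContinuousOn w'' (Icc z₁ z₂))
    (hw0 : ∃ z ∈ Icc z₁ z₂, w z ≠ 0)
    (hbc₁ : w z₁ = 0) (hbc₂ : w z₂ = 0)
    (heq : ∀ z ∈ Icc z₁ z₂,
      w'' z - (α : ℂ) ^ 2 * w z - ((U'' z : ℂ) / ((U z : ℂ) - c)) * w z
        + ((g : ℂ) * (β z : ℂ) / ((U z : ℂ) - c) ^ 2) * w z = 0) :
    (∫ z in z₁..z₂, (‖w' z‖ ^ 2 + α ^ 2 * ‖w z‖ ^ 2))
      + (∫ z in z₁..z₂,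
          U'' z * (U z - c.re) / ((U z - c.re) ^ 2 + c.im ^ 2) * ‖w z‖ ^ 2)
      - (∫ z in z₁..z₂,
          g * β z * ((U z - c.re) ^ 2 - c.im ^ 2)
            / ((U z - c.re) ^ 2 + c.im ^ 2) ^ 2 * ‖w z‖ ^ 2)
      = 0 := by
  have hz' : z₁ ≤ z₂ := hz.le
  have hIcc : uIcc z₁ z₂ = Icc z₁ z₂ := uIcc_of_le hz'
  have hwc : ContinuousOn w (Icc z₁ z₂) := fun z hzI => ((hw z hzI).continuousAt).continuousWithinAt
  have hw'c : ContinuousOn w' (Icc z₁ z₂) := fun z hzI => ((hw' z hzI).continuousAt).continuousWithinAt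
  have hUc : ContinuousOn U (Icc z₁ z₂) := fun z hzI => ((hU z hzI).continuousAt).continuousWithinAt
  have hden : ∀ z : ℝ, 0 < (U z - c.re)^2 + c.im^2 := fun z => by positivity
  set f : ℝ → ℂ := fun z => w'' z * (starRingEnd ℂ) (w z) + w' z * (starRingEnd ℂ) (w' z) with hf
  have hfc : ContinuousOn f (Icc z₁ z₂) := by
    exact (hw''.mul (Complex.continuous_conj.comp_continuousOn hwc)).add
      (hw'c.mul (Complex.continuous_conj.comp_continuousOn hw'c))
  have hfi : IntervalIntegrable f volume z₁ z₂ := by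
    apply ContinuousOn.intervalIntegrable; rwa [hIcc]
  have hderiv : ∀ z ∈ uIcc z₁ z₂,
      HasDerivAt (fun t => w' t * (starRingEnd ℂ) (w t)) (f z) z := by
    rw [hIcc]; intro z hzI
    rw [hf]; exact (hw' z hzI).mul ((hw z hzI).star)
  have hFTC : (∫ z in z₁..z₂, f z) = 0 := by
    rw [intervalIntegral.integral_eq_sub_of_hasDerivAt hderiv hfi]
    simp [hbc₁, hbc₂]
  have hre : (∫ z in z₁..z₂, (f z).re) = 0 := by
    have := (Complex.reCLM).intervalIntegral_comp_comm hfi (a := z₁) (b := z₂)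
    simpa [hFTC] using this
  -- pointwise identity
  set P : ℝ → ℝ := fun z => ‖w' z‖ ^ 2 + α ^ 2 * ‖w z‖ ^ 2 with hP
  set Q : ℝ → ℝ := fun z =>
    U'' z * (U z - c.re) / ((U z - c.re) ^ 2 + c.im ^ 2) * ‖w z‖ ^ 2 with hQ
  set R : ℝ → ℝ := fun z =>
    g * β z * ((U z - c.re) ^ 2 - c.im ^ 2)
      / ((U z - c.re) ^ 2 + c.im ^ 2) ^ 2 * ‖w z‖ ^ 2 with hR
  have hpt : ∀ z ∈ Icc z₁ z₂, (f z).re = P z + Q z - R z := by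
    intro z hzI
    set x : ℂ := (U z : ℂ) - c with hxdef
    have hxre : x.re = U z - c.re := by simp [hxdef]
    have hxim : x.im = -c.im := by simp [hxdef]
    have hnsq : Complex.normSq x = (U z - c.re)^2 + c.im^2 := by
      rw [Complex.normSq_apply, hxre, hxim]; ring
    have hx : x ≠ 0 := by
      intro h
      have : x.im = 0 := by rw [h]; simp
      rw [hxim] at this; linarith
    have hw2 : w'' z = ((α:ℂ)^2 + (U'' z : ℂ)/x - (g:ℂ)*(β z:ℂ)/x^2) * w z := by
      have h := heq z hzI
      rw [hxdef]
      linear_combination h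
    have hmc : w z * (starRingEnd ℂ) (w z) = (‖w z‖^2 : ℝ) := by
      rw [Complex.mul_conj]; norm_cast
      simp [Complex.normSq_eq_norm_sq]
    have hmc' : w' z * (starRingEnd ℂ) (w' z) = (‖w' z‖^2 : ℝ) := by
      rw [Complex.mul_conj]; norm_cast
      simp [Complex.normSq_eq_norm_sq]
    have : f z = ((α:ℂ)^2 + (U'' z : ℂ)/x - (g:ℂ)*(β z:ℂ)/x^2) * (‖w z‖^2 : ℝ)
        + (‖w' z‖^2 : ℝ) := by
      rw [hf]; simp only
      rw [hw2, mul_assoc, hmc, hmc']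
    rw [this]
    have h1 : ((U'' z : ℂ)/x).re = U'' z * (U z - c.re) / ((U z - c.re)^2 + c.im^2) := by
      rw [re_real_div, hxre, hnsq]
    have h2 : ((g:ℂ)*(β z:ℂ)/x^2).re
        = g * β z * ((U z - c.re)^2 - c.im^2) / ((U z - c.re)^2 + c.im^2)^2 := by
      have : (g:ℂ)*(β z:ℂ) = ((g * β z : ℝ) : ℂ) := by push_cast; ring
      rw [this, re_real_div_sq, hxre, hxim, hnsq]; ring
    rw [hP, hQ, hR]
    simp only [Complex.add_re, Complex.sub_re, Complex.mul_re, Complex.ofReal_re,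
      Complex.ofReal_im, h1, h2, ← Complex.ofReal_pow]
    ring
  -- integrability of the three real integrands
  have hw2c : ContinuousOn (fun z => ‖w z‖ ^ 2) (Icc z₁ z₂) := (hwc.norm.pow 2)
  have hdc : ContinuousOn (fun z => (U z - c.re) ^ 2 + c.im ^ 2) (Icc z₁ z₂) :=
    ((hUc.sub continuousOn_const).pow 2).add continuousOn_const
  have hPi : IntervalIntegrable P volume z₁ z₂ := by
    apply ContinuousOn.intervalIntegrable; rw [hIcc]
    exact (hw'c.norm.pow 2).add (continuousOn_const.mul hw2c)
  have hQi : IntervalIntegrable Q volume z₁ z₂ := by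
    apply ContinuousOn.intervalIntegrable; rw [hIcc]
    exact (((hU''.mul (hUc.sub continuousOn_const)).div hdc
      (fun z hzI => (hden z).ne')).mul hw2c)
  have hRi : IntervalIntegrable R volume z₁ z₂ := by
    apply ContinuousOn.intervalIntegrable; rw [hIcc]
    exact ((((continuousOn_const.mul hβc).mul
      (((hUc.sub continuousOn_const).pow 2).sub continuousOn_const)).div (hdc.pow 2)
      (fun z hzI => pow_ne_zero 2 (hden z).ne')).mul hw2c)
  have key : (∫ z in z₁..z₂, P z) + (∫ z in z₁..z₂, Q z) - (∫ z in z₁..z₂, R z) = 0 := by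
    rw [← intervalIntegral.integral_add hPi hQi, ← intervalIntegral.integral_sub (hPi.add hQi) hRi,
      ← hre]
    apply intervalIntegral.integral_congr
    rw [hIcc]
    intro z hzI
    exact (hpt z hzI).symm
  simpa [hP, hQ, hR] using key
end

section
/- If (w, c, α²) is a non-trivial solution of the Taylor–Goldstein eigenvalue problem with c_i > 0, then the imaginary-part integral relation ∫_{z₁}^{z₂} U″/((U − c_r)² + c_i²) |w|² dz − 2 ∫_{z₁}^{z₂} gβ(U − c_r)/((U − c_r)² + c_i²)² |w|² dz = 0 holds (Lemma 3.1, relation (3.2)). -/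
open Set

/-- Lemma 3.1, relation (3.2): the imaginary part of the first integral identity for the
Taylor–Goldstein eigenvalue problem. -/
theorem taylor_goldstein_imaginary_part_relation
    (z₁ z₂ : ℝ) (hz : z₁ < z₂)
    (g : ℝ) (hg : 0 < g)
    (U U' U'' : ℝ → ℝ)
    (hU : ∀ z ∈ Icc z₁ z₂, HasDerivAt U (U' z) z)
    (hU' : ∀ z ∈ Icc z₁ z₂, HasDerivAt U' (U'' z) z)
    (hU'' : ContinuousOn U'' (Icc z₁ z₂))
    (β : ℝ → ℝ) (hβc : ContinuousOn β (Icc z₁ z₂))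
    (hβ : ∀ z ∈ Icc z₁ z₂, 0 ≤ β z)
    (α : ℝ) (hα : 0 < α)
    (c : ℂ) (hci : 0 < c.im)
    (w w' w'' : ℝ → ℂ)
    (hw : ∀ z ∈ Icc z₁ z₂, HasDerivAt w (w' z) z)
    (hw' : ∀ z ∈ Icc z₁ z₂, HasDerivAt w' (w'' z) z)
    (hw'' : ContinuousOn w'' (Icc z₁ z₂))
    (hw0 : ∃ z ∈ Icc z₁ z₂, w z ≠ 0)
    (hbc₁ : w z₁ = 0) (hbc₂ : w z₂ = 0)
    (heq : ∀ z ∈ Icc z₁ z₂,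
      w'' z - (α : ℂ) ^ 2 * w z - ((U'' z : ℂ) / ((U z : ℂ) - c)) * w z
        + ((g : ℂ) * (β z : ℂ) / ((U z : ℂ) - c) ^ 2) * w z = 0) :
    (∫ z in z₁..z₂, U'' z / ((U z - c.re) ^ 2 + c.im ^ 2) * ‖w z‖ ^ 2)
      - 2 * (∫ z in z₁..z₂,
          g * β z * (U z - c.re) / ((U z - c.re) ^ 2 + c.im ^ 2) ^ 2 * ‖w z‖ ^ 2)
      = 0 := by
  have hz' : z₁ ≤ z₂ := hz.le
  have huIcc : uIcc z₁ z₂ = Icc z₁ z₂ := uIcc_of_le hz'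
  set D : ℝ → ℝ := fun z => (U z - c.re) ^ 2 + c.im ^ 2 with hDdef
  have hDpos : ∀ z, 0 < D z := fun z => by
    have : 0 < c.im ^ 2 := by positivity
    have : 0 ≤ (U z - c.re) ^ 2 := sq_nonneg _
    simp only [hDdef]; positivity
  have hUc : ∀ z : ℝ, ((U z : ℂ) - c) ≠ 0 := by
    intro z h
    have := congrArg Complex.im h
    simp only [Complex.sub_im, Complex.ofReal_im, Complex.zero_im] at this
    linarith
  -- continuity facts
  have hwc : ContinuousOn w (Icc z₁ z₂) := fun z hzz => (hw z hzz).continuousAt.continuousWithinAt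
  have hw'c : ContinuousOn w' (Icc z₁ z₂) := fun z hzz => (hw' z hzz).continuousAt.continuousWithinAt
  have hUcont : ContinuousOn U (Icc z₁ z₂) := fun z hzz => (hU z hzz).continuousAt.continuousWithinAt
  have hDcont : ContinuousOn D (Icc z₁ z₂) := by
    simp only [hDdef]
    exact ((hUcont.sub continuousOn_const).pow 2).add continuousOn_const
  have hnw2 : ContinuousOn (fun z => ‖w z‖ ^ 2) (Icc z₁ z₂) := (hwc.norm.pow 2)
  -- the two real integrands
  set g1 : ℝ → ℝ := fun z => U'' z / D z * ‖w z‖ ^ 2 with hg1def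
  set g2 : ℝ → ℝ := fun z => g * β z * (U z - c.re) / (D z) ^ 2 * ‖w z‖ ^ 2 with hg2def
  have hg1c : ContinuousOn g1 (Icc z₁ z₂) :=
    (hU''.div hDcont (fun z hzz => (hDpos z).ne')).mul hnw2
  have hg2c : ContinuousOn g2 (Icc z₁ z₂) :=
    (((continuousOn_const.mul hβc).mul (hUcont.sub continuousOn_const)).div
      (hDcont.pow 2) (fun z hzz => pow_ne_zero 2 (hDpos z).ne')).mul hnw2
  have hg1int : IntervalIntegrable g1 MeasureTheory.volume z₁ z₂ :=
    (hg1c.mono (by rw [huIcc])).intervalIntegrable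
  have hg2int : IntervalIntegrable g2 MeasureTheory.volume z₁ z₂ :=
    (hg2c.mono (by rw [huIcc])).intervalIntegrable
  -- FTC for conj w * w'
  set F : ℝ → ℂ := fun z => (starRingEnd ℂ) (w z) * w' z with hFdef
  set F' : ℝ → ℂ := fun z => (starRingEnd ℂ) (w' z) * w' z + (starRingEnd ℂ) (w z) * w'' z
    with hF'def
  have hF'c : ContinuousOn F' (Icc z₁ z₂) := by
    simp only [hF'def]
    exact ((continuous_star.comp_continuousOn hw'c).mul hw'c).add
      ((continuous_star.comp_continuousOn hwc).mul hw'')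
  have hF'int : IntervalIntegrable F' MeasureTheory.volume z₁ z₂ :=
    (hF'c.mono (by rw [huIcc])).intervalIntegrable
  have hderiv : ∀ z ∈ uIcc z₁ z₂, HasDerivAt F (F' z) z := by
    intro z hzz
    rw [huIcc] at hzz
    exact ((hw z hzz).star.mul (hw' z hzz))
  have hFTC : (∫ z in z₁..z₂, F' z) = 0 := by
    rw [intervalIntegral.integral_eq_sub_of_hasDerivAt hderiv hF'int]
    simp [hFdef, hbc₁, hbc₂]
  -- pointwise imaginary part
  have key : ∀ z ∈ Icc z₁ z₂, (F' z).im = c.im * (g1 z - 2 * g2 z) := by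
    intro z hzz
    have ha : ((U z : ℂ) - c) ≠ 0 := hUc z
    have hw2 : w'' z = (α : ℂ) ^ 2 * w z + ((U'' z : ℂ) / ((U z : ℂ) - c)) * w z
        - ((g : ℂ) * (β z : ℂ) / ((U z : ℂ) - c) ^ 2) * w z := by
      have h := heq z hzz
      linear_combination h
    have hcw : (starRingEnd ℂ) (w z) * w z = ((‖w z‖ ^ 2 : ℝ) : ℂ) := by
      rw [mul_comm, Complex.mul_conj]
      norm_cast
      rw [Complex.normSq_eq_norm_sq]
    have hsplit : F' z = (starRingEnd ℂ) (w' z) * w' z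
        + ((α : ℂ) ^ 2 + (U'' z : ℂ) / ((U z : ℂ) - c)
          - (g : ℂ) * (β z : ℂ) / ((U z : ℂ) - c) ^ 2) * ((‖w z‖ ^ 2 : ℝ) : ℂ) := by
      simp only [hF'def, hw2]
      rw [← hcw]; ring
    rw [hsplit]
    have him1 : ((starRingEnd ℂ) (w' z) * w' z).im = 0 := by
      simp [Complex.mul_im]; ring
    set a : ℂ := (U z : ℂ) - c with hadef
    have hare : a.re = U z - c.re := by simp [hadef]
    have haim : a.im = -c.im := by simp [hadef]
    have hnsq : Complex.normSq a = D z := by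
      simp only [Complex.normSq_apply, hare, haim, hDdef]; ring
    have hnsq0 : Complex.normSq a ≠ 0 := by rw [hnsq]; exact (hDpos z).ne'
    have hDz0 : D z ≠ 0 := (hDpos z).ne'
    simp only [Complex.add_im, him1, zero_add, Complex.mul_im, Complex.ofReal_im,
      Complex.ofReal_re, mul_zero, add_zero, zero_mul]
    have h1 : ((α : ℂ) ^ 2 + (U'' z : ℂ) / a - (g : ℂ) * (β z : ℂ) / a ^ 2).im
        = U'' z * c.im / D z - g * β z * (2 * (U z - c.re) * c.im) / (D z) ^ 2 := by
      have hinv : (a⁻¹).im = c.im / D z := by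
        rw [Complex.inv_im, haim, hnsq]; ring
      have hinvre : (a⁻¹).re = (U z - c.re) / D z := by
        rw [Complex.inv_re, hare, hnsq]
      have hsq : ((a ^ 2)⁻¹).im = 2 * (U z - c.re) * c.im / (D z) ^ 2 := by
        rw [pow_two, mul_inv, Complex.mul_im, hinv, hinvre]
        field_simp
        ring
      rw [Complex.sub_im, Complex.add_im, div_eq_mul_inv, div_eq_mul_inv,
        Complex.mul_im, Complex.mul_im]
      simp only [Complex.ofReal_im, Complex.ofReal_re, hinv, hsq]
      have : ((α : ℂ) ^ 2).im = 0 := by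
        norm_cast
      rw [this]
      have hgb : ((g : ℂ) * (β z : ℂ)).im = 0 := by
        simp [Complex.mul_im]
      have hgbre : ((g : ℂ) * (β z : ℂ)).re = g * β z := by
        simp [Complex.mul_re]
      rw [hgb, hgbre]
      ring
    rw [h1]
    simp only [hg1def, hg2def]
    field_simp
  -- put it together
  have himint : (∫ z in z₁..z₂, F' z).im = ∫ z in z₁..z₂, (F' z).im := by
    simpa using (Complex.imCLM.intervalIntegral_comp_comm hF'int).symm
  have hcongr : (∫ z in z₁..z₂, (F' z).im)
      = ∫ z in z₁..z₂, c.im * (g1 z - 2 * g2 z) := by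
    apply intervalIntegral.integral_congr
    intro z hzz
    rw [huIcc] at hzz
    exact key z hzz
  have hsplitint : (∫ z in z₁..z₂, c.im * (g1 z - 2 * g2 z))
      = c.im * ((∫ z in z₁..z₂, g1 z) - 2 * ∫ z in z₁..z₂, g2 z) := by
    rw [intervalIntegral.integral_const_mul, intervalIntegral.integral_sub hg1int
      (hg2int.const_mul 2), intervalIntegral.integral_const_mul]
  have hzero : c.im * ((∫ z in z₁..z₂, g1 z) - 2 * ∫ z in z₁..z₂, g2 z) = 0 := by
    rw [← hsplitint, ← hcongr, ← himint, hFTC, Complex.zero_im]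
  have := mul_eq_zero.mp hzero
  rcases this with h | h
  · exact absurd h hci.ne'
  · exact h
end

section
/- If (w, c, α²) is a non-trivial solution of the Taylor–Goldstein eigenvalue problem with c_i > 0, then the integral relation ∫_{z₁}^{z₂} (|w″|² + α²|w′|²) dz − α² ∫_{z₁}^{z₂} U″(U − c_r)/((U − c_r)² + c_i²) |w|² dz + α² ∫_{z₁}^{z₂} gβ((U − c_r)² − c_i²)/((U − c_r)² + c_i²)² |w|² dz − ∫_{z₁}^{z₂} (U″)²/((U − c_r)² + c_i²) |w|² dz + 2 ∫_{z₁}^{z₂} gβ U″ (U − c_r)/((U − c_r)² + c_i²)² |w|² dz − ∫_{z₁}^{z₂} g²β²/((U − c_r)² + c_i²)² |w|² dz = 0 holds (Lemma 3.2, relation (3.7)). -/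
open Set MeasureTheory

private lemma tg_Qre (t u a b : ℝ) (s : ℂ) (hre : s.re = a) (him : s.im = -b) (hb : b ≠ 0) :
    ((t : ℂ)/s - (u:ℂ)/s^2).re
      = t*a/(a^2+b^2) - u*(a^2-b^2)/(a^2+b^2)^2 := by
  have hD : a^2+b^2 ≠ 0 := by positivity
  have hD' : a^2*b^2*2+a^4+b^4 ≠ 0 := by positivity
  simp only [Complex.sub_re, Complex.div_re, Complex.normSq_apply, Complex.div_im, pow_two,
    Complex.mul_re, Complex.mul_im, Complex.ofReal_re, Complex.ofReal_im, hre, him]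
  ring_nf

private lemma tg_QnormSq (t u a b : ℝ) (s : ℂ) (hre : s.re = a) (him : s.im = -b) (hb : b ≠ 0) :
    Complex.normSq ((t : ℂ)/s - (u:ℂ)/s^2)
      = t^2/(a^2+b^2) - 2*(t*u*a/(a^2+b^2)^2) + u^2/(a^2+b^2)^2 := by
  have hD : a^2+b^2 ≠ 0 := by positivity
  have hD' : a^2*b^2*2+a^4+b^4 ≠ 0 := by positivity
  simp only [Complex.normSq_apply, Complex.sub_re, Complex.sub_im, Complex.div_re, Complex.div_im,
    pow_two, Complex.mul_re, Complex.mul_im, Complex.ofReal_re, Complex.ofReal_im, hre, him]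
  ring_nf
  field_simp
  ring

private lemma tg_energy_pt (a : ℝ) (Q w2 w0 : ℂ) (h : w2 = (a:ℂ)^2 * w0 + Q * w0) :
    ((‖w2‖^2 :ℝ): ℂ) = (a:ℂ)^2 * ((starRingEnd ℂ) w0 * w2)
      + (a:ℂ)^2 * ((starRingEnd ℂ) Q * ((‖w0‖^2:ℝ) : ℂ))
      + ((Complex.normSq Q * ‖w0‖^2 : ℝ) : ℂ) := by
  have h1 : ((‖w2‖^2:ℝ) : ℂ) = (starRingEnd ℂ) w2 * w2 := by
    rw [mul_comm, Complex.mul_conj']; push_cast; ring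
  have h2 : (starRingEnd ℂ) w0 * w0 = ((‖w0‖^2:ℝ) : ℂ) := by
    rw [mul_comm, Complex.mul_conj']; push_cast; ring
  have h3 : (starRingEnd ℂ) Q * Q = ((Complex.normSq Q : ℝ) : ℂ) := by
    rw [mul_comm, Complex.mul_conj]
  rw [h1, h]
  push_cast
  simp only [map_add, map_mul, map_pow, Complex.conj_ofReal]
  linear_combination (norm := (push_cast; ring1))
    ((a:ℂ)^2 * (starRingEnd ℂ) Q + (starRingEnd ℂ) Q * Q) * h2 + ((‖w0‖^2:ℝ) : ℂ) * h3

/-- Lemma 3.2, relation (3.7). -/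
theorem taylor_goldstein_relation_3_7
    (z₁ z₂ : ℝ) (hz : z₁ < z₂)
    (g : ℝ) (hg : 0 < g)
    (U U' U'' : ℝ → ℝ)
    (hU : ∀ z ∈ Icc z₁ z₂, HasDerivAt U (U' z) z)
    (hU' : ∀ z ∈ Icc z₁ z₂, HasDerivAt U' (U'' z) z)
    (hU'' : ContinuousOn U'' (Icc z₁ z₂))
    (β : ℝ → ℝ) (hβc : ContinuousOn β (Icc z₁ z₂))
    (hβ : ∀ z ∈ Icc z₁ z₂, 0 ≤ β z)
    (α : ℝ) (hα : 0 < α)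
    (c : ℂ) (hci : 0 < c.im)
    (w w' w'' : ℝ → ℂ)
    (hw : ∀ z ∈ Icc z₁ z₂, HasDerivAt w (w' z) z)
    (hw' : ∀ z ∈ Icc z₁ z₂, HasDerivAt w' (w'' z) z)
    (hw'' : ContinuousOn w'' (Icc z₁ z₂))
    (hw0 : ∃ z ∈ Icc z₁ z₂, w z ≠ 0)
    (hbc₁ : w z₁ = 0) (hbc₂ : w z₂ = 0)
    (heq : ∀ z ∈ Icc z₁ z₂,
      w'' z - (α : ℂ) ^ 2 * w z - ((U'' z : ℂ) / ((U z : ℂ) - c)) * w z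
        + ((g : ℂ) * (β z : ℂ) / ((U z : ℂ) - c) ^ 2) * w z = 0) :
    (∫ z in z₁..z₂, (‖w'' z‖ ^ 2 + α ^ 2 * ‖w' z‖ ^ 2))
      - α ^ 2 * (∫ z in z₁..z₂,
          U'' z * (U z - c.re) / ((U z - c.re) ^ 2 + c.im ^ 2) * ‖w z‖ ^ 2)
      + α ^ 2 * (∫ z in z₁..z₂,
          g * β z * ((U z - c.re) ^ 2 - c.im ^ 2)
            / ((U z - c.re) ^ 2 + c.im ^ 2) ^ 2 * ‖w z‖ ^ 2)
      - (∫ z in z₁..z₂,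
          (U'' z) ^ 2 / ((U z - c.re) ^ 2 + c.im ^ 2) * ‖w z‖ ^ 2)
      + 2 * (∫ z in z₁..z₂,
          g * β z * U'' z * (U z - c.re)
            / ((U z - c.re) ^ 2 + c.im ^ 2) ^ 2 * ‖w z‖ ^ 2)
      - (∫ z in z₁..z₂,
          g ^ 2 * (β z) ^ 2 / ((U z - c.re) ^ 2 + c.im ^ 2) ^ 2 * ‖w z‖ ^ 2)
      = 0 := by
  have hzle : z₁ ≤ z₂ := hz.le
  have hIcc : uIcc z₁ z₂ = Icc z₁ z₂ := uIcc_of_le hzle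
  -- basic continuity
  have hUc : ContinuousOn U (Icc z₁ z₂) := fun z hzm => (hU z hzm).continuousAt.continuousWithinAt
  have hwc : ContinuousOn w (Icc z₁ z₂) := fun z hzm => (hw z hzm).continuousAt.continuousWithinAt
  have hw'c : ContinuousOn w' (Icc z₁ z₂) :=
    fun z hzm => (hw' z hzm).continuousAt.continuousWithinAt
  set s : ℝ → ℂ := fun z => (U z : ℂ) - c with hs_def
  have hsre : ∀ z, (s z).re = U z - c.re := fun z => by simp [hs_def]
  have hsim : ∀ z, (s z).im = -c.im := fun z => by simp [hs_def]
  have hs0 : ∀ z, s z ≠ 0 := by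
    intro z h0
    have h1 := congrArg Complex.im h0
    rw [hsim z] at h1
    simp at h1
    exact absurd h1 (by linarith)
  set D : ℝ → ℝ := fun z => (U z - c.re)^2 + c.im^2 with hD_def
  have hDpos : ∀ z, 0 < D z := fun z => by
    have := hci; simp only [hD_def]; positivity
  have hDne : ∀ z ∈ Icc z₁ z₂, D z ≠ 0 := fun z _ => (hDpos z).ne'
  set Q : ℝ → ℂ := fun z => (U'' z : ℂ)/(s z) - ((g*β z : ℝ):ℂ)/(s z)^2 with hQ_def
  have hQre : ∀ z, (Q z).re
      = U'' z * (U z - c.re)/D z - g*β z*((U z - c.re)^2 - c.im^2)/(D z)^2 := by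
    intro z
    have h := tg_Qre (U'' z) (g*β z) (U z - c.re) c.im (s z) (hsre z) (hsim z) hci.ne'
    simpa [hQ_def, hD_def] using h
  have hQns : ∀ z, Complex.normSq (Q z)
      = (U'' z)^2/D z - 2*(U'' z*(g*β z)*(U z - c.re)/(D z)^2) + (g*β z)^2/(D z)^2 := by
    intro z
    have h := tg_QnormSq (U'' z) (g*β z) (U z - c.re) c.im (s z) (hsre z) (hsim z) hci.ne'
    simpa [hQ_def, hD_def] using h
  -- continuity of s, Q, D
  have hsc : ContinuousOn s (Icc z₁ z₂) :=
    (Complex.continuous_ofReal.comp_continuousOn hUc).sub continuousOn_const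
  have hQc : ContinuousOn Q (Icc z₁ z₂) :=
    ((Complex.continuous_ofReal.comp_continuousOn hU'').div hsc (fun z _ => hs0 z)).sub
      ((Complex.continuous_ofReal.comp_continuousOn (continuousOn_const.mul hβc)).div
        (hsc.pow 2) (fun z _ => pow_ne_zero 2 (hs0 z)))
  have hDc : ContinuousOn D (Icc z₁ z₂) :=
    ((hUc.sub continuousOn_const).pow 2).add continuousOn_const
  have hwn2 : ContinuousOn (fun z => ‖w z‖^2) (Icc z₁ z₂) := hwc.norm.pow 2
  -- the ODE in the form w'' = α² w + Q w
  have hww : ∀ z ∈ Icc z₁ z₂, w'' z = (α:ℂ)^2 * w z + Q z * w z := by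
    intro z hzm
    have h := heq z hzm
    simp only [hQ_def, hs_def] at h ⊢
    push_cast
    push_cast at h
    linear_combination h
  -- pointwise energy identity
  have hE : ∀ z ∈ Icc z₁ z₂,
      ((‖w'' z‖^2 :ℝ): ℂ) = (α:ℂ)^2 * ((starRingEnd ℂ) (w z) * w'' z)
        + (α:ℂ)^2 * ((starRingEnd ℂ) (Q z) * ((‖w z‖^2:ℝ) : ℂ))
        + ((Complex.normSq (Q z) * ‖w z‖^2 : ℝ) : ℂ) :=
    fun z hzm => tg_energy_pt α (Q z) (w'' z) (w z) (hww z hzm)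
  -- integrability (complex)
  have icf2 : IntervalIntegrable (fun z => (starRingEnd ℂ) (w z) * w'' z) volume z₁ z₂ :=
    (hwc.star.mul hw'').intervalIntegrable_of_Icc hzle
  have icf3 : IntervalIntegrable
      (fun z => (starRingEnd ℂ) (Q z) * ((‖w z‖^2:ℝ) : ℂ)) volume z₁ z₂ :=
    (hQc.star.mul (Complex.continuous_ofReal.comp_continuousOn hwn2)).intervalIntegrable_of_Icc hzle
  have icf4 : IntervalIntegrable
      (fun z => ((Complex.normSq (Q z) * ‖w z‖^2 : ℝ) : ℂ)) volume z₁ z₂ :=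
    (Complex.continuous_ofReal.comp_continuousOn
      ((Complex.continuous_normSq.comp_continuousOn hQc).mul hwn2)).intervalIntegrable_of_Icc hzle
  -- integrate the energy identity
  have hInt : (∫ z in z₁..z₂, ((‖w'' z‖^2:ℝ):ℂ)) =
      (∫ z in z₁..z₂, (α:ℂ)^2 * ((starRingEnd ℂ) (w z) * w'' z))
      + (∫ z in z₁..z₂, (α:ℂ)^2 * ((starRingEnd ℂ) (Q z) * ((‖w z‖^2:ℝ):ℂ)))
      + (∫ z in z₁..z₂, ((Complex.normSq (Q z) * ‖w z‖^2 : ℝ):ℂ)) := by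
    rw [← intervalIntegral.integral_add (icf2.const_mul _) (icf3.const_mul _),
      ← intervalIntegral.integral_add ((icf2.const_mul _).add (icf3.const_mul _)) icf4]
    exact intervalIntegral.integral_congr (fun z hzm => hE z (hIcc ▸ hzm))
  -- integration by parts
  have hibp : (∫ z in z₁..z₂, (starRingEnd ℂ) (w z) * w'' z)
      = -(((∫ z in z₁..z₂, ‖w' z‖^2) : ℝ) : ℂ) := by
    have h := intervalIntegral.integral_mul_deriv_eq_deriv_mul
      (u := fun z => (starRingEnd ℂ) (w z)) (u' := fun z => (starRingEnd ℂ) (w' z))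
      (v := w') (v' := w'')
      (fun x hx => (hw x (hIcc ▸ hx)).star)
      (fun x hx => hw' x (hIcc ▸ hx))
      (hw'c.star.intervalIntegrable_of_Icc hzle)
      (hw''.intervalIntegrable_of_Icc hzle)
    simp only [hbc₁, hbc₂, map_zero, zero_mul, sub_zero, zero_sub] at h
    rw [h]
    congr 1
    rw [← intervalIntegral.integral_ofReal]
    refine intervalIntegral.integral_congr (fun z hzm => ?_)
    rw [mul_comm, Complex.mul_conj']
    push_cast
    ring
  rw [intervalIntegral.integral_const_mul, intervalIntegral.integral_const_mul, hibp,
    intervalIntegral.integral_ofReal, intervalIntegral.integral_ofReal] at hInt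
  -- take the real part
  have hre := congrArg Complex.re hInt
  simp only [Complex.add_re, Complex.mul_re, Complex.ofReal_re, Complex.ofReal_im,
    Complex.neg_re, Complex.neg_im, ← Complex.ofReal_pow, mul_zero, zero_mul, sub_zero] at hre
  -- hre : ∫‖w''‖² = α²*(-∫‖w'‖²) + α² * I3.re + ∫ normSq Q ‖w‖²
  have hI3re : (∫ z in z₁..z₂, (starRingEnd ℂ) (Q z) * ((‖w z‖^2:ℝ):ℂ)).re
      = ∫ z in z₁..z₂, (Q z).re * ‖w z‖^2 := by
    have h := Complex.reCLM.intervalIntegral_comp_comm (μ := volume) icf3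
    simp only [Complex.reCLM_apply] at h
    rw [← h]
    refine intervalIntegral.integral_congr (fun z hzm => ?_)
    simp [Complex.mul_re, ← Complex.ofReal_pow]
  rw [hI3re] at hre
  -- integrability (real pieces)
  have hUsub : ContinuousOn (fun z => U z - c.re) (Icc z₁ z₂) := hUc.sub continuousOn_const
  have i1 : IntervalIntegrable (fun z => ‖w'' z‖^2) volume z₁ z₂ :=
    (hw''.norm.pow 2).intervalIntegrable_of_Icc hzle
  have i2 : IntervalIntegrable (fun z => ‖w' z‖^2) volume z₁ z₂ :=
    (hw'c.norm.pow 2).intervalIntegrable_of_Icc hzle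
  have iI2 : IntervalIntegrable (fun z => U'' z * (U z - c.re) / D z * ‖w z‖^2) volume z₁ z₂ :=
    (((hU''.mul hUsub).div hDc hDne).mul hwn2).intervalIntegrable_of_Icc hzle
  have iI3 : IntervalIntegrable
      (fun z => g * β z * ((U z - c.re)^2 - c.im^2) / (D z)^2 * ‖w z‖^2) volume z₁ z₂ :=
    ((((continuousOn_const.mul hβc).mul ((hUsub.pow 2).sub continuousOn_const)).div
      (hDc.pow 2) (fun z hzm => pow_ne_zero 2 (hDne z hzm))).mul hwn2).intervalIntegrable_of_Icc hzle
  have iI4 : IntervalIntegrable (fun z => (U'' z)^2 / D z * ‖w z‖^2) volume z₁ z₂ :=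
    (((hU''.pow 2).div hDc hDne).mul hwn2).intervalIntegrable_of_Icc hzle
  have iI5 : IntervalIntegrable
      (fun z => g * β z * U'' z * (U z - c.re) / (D z)^2 * ‖w z‖^2) volume z₁ z₂ :=
    (((((continuousOn_const.mul hβc).mul hU'').mul hUsub).div
      (hDc.pow 2) (fun z hzm => pow_ne_zero 2 (hDne z hzm))).mul hwn2).intervalIntegrable_of_Icc hzle
  have iI6 : IntervalIntegrable
      (fun z => g^2 * (β z)^2 / (D z)^2 * ‖w z‖^2) volume z₁ z₂ :=
    (((continuousOn_const.mul (hβc.pow 2)).div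
      (hDc.pow 2) (fun z hzm => pow_ne_zero 2 (hDne z hzm))).mul hwn2).intervalIntegrable_of_Icc hzle
  -- split ∫ Q.re ‖w‖²
  have hsplit3 : (∫ z in z₁..z₂, (Q z).re * ‖w z‖^2)
      = (∫ z in z₁..z₂, U'' z * (U z - c.re) / D z * ‖w z‖^2)
        - (∫ z in z₁..z₂, g * β z * ((U z - c.re)^2 - c.im^2) / (D z)^2 * ‖w z‖^2) := by
    rw [← intervalIntegral.integral_sub iI2 iI3]
    refine intervalIntegral.integral_congr (fun z hzm => ?_)
    rw [hQre z]; ring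
  -- split ∫ normSq Q ‖w‖²
  have hsplit4 : (∫ z in z₁..z₂, Complex.normSq (Q z) * ‖w z‖^2)
      = (∫ z in z₁..z₂, (U'' z)^2 / D z * ‖w z‖^2)
        - 2 * (∫ z in z₁..z₂, g * β z * U'' z * (U z - c.re) / (D z)^2 * ‖w z‖^2)
        + (∫ z in z₁..z₂, g^2 * (β z)^2 / (D z)^2 * ‖w z‖^2) := by
    rw [← intervalIntegral.integral_const_mul, ← intervalIntegral.integral_sub iI4 (iI5.const_mul 2),
      ← intervalIntegral.integral_add (iI4.sub (iI5.const_mul 2)) iI6]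
    refine intervalIntegral.integral_congr (fun z hzm => ?_)
    rw [hQns z]; ring
  rw [hsplit3, hsplit4] at hre
  -- first integral splits
  have hfirst : (∫ z in z₁..z₂, (‖w'' z‖^2 + α^2 * ‖w' z‖^2))
      = (∫ z in z₁..z₂, ‖w'' z‖^2) + α^2 * (∫ z in z₁..z₂, ‖w' z‖^2) := by
    rw [← intervalIntegral.integral_const_mul,
      intervalIntegral.integral_add i1 (i2.const_mul _)]
  rw [hfirst]
  simp only [hD_def] at hre
  linarith [hre]
end

section
/- If (w, c, α²) is a non-trivial solution of the Taylor–Goldstein eigenvalue problem with c_i > 0, then the integral relation ∫_{z₁}^{z₂} (|w″|² + 2α²|w′|² + α⁴|w|²) dz − ∫_{z₁}^{z₂} (U″)²/((U − c_r)² + c_i²) |w|² dz + 2 ∫_{z₁}^{z₂} gβ U″ (U − c_r)/((U − c_r)² + c_i²)² |w|² dz − ∫_{z₁}^{z₂} g²β²/((U − c_r)² + c_i²)² |w|² dz = 0 holds (Lemma 3.2, relation (3.8)). -/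
open Set

lemma normSq_helper (t u b r i : ℝ) (hi : i ≠ 0) (ζ : ℂ) (hζre : ζ.re = t - r)
    (hζim : ζ.im = -i) :
    ‖(u:ℂ)/ζ - (b:ℂ)/ζ^2‖^2
      = u^2/((t-r)^2+i^2) - 2*(b*u*(t-r)/((t-r)^2+i^2)^2)
        + b^2/((t-r)^2+i^2)^2 := by
  have hD : (t-r)^2 + i^2 ≠ 0 := by positivity
  have hζ : ζ ≠ 0 := by
    intro h; rw [h] at hζim; simp at hζim; exact hi hζim
  have hnζ : Complex.normSq ζ = (t-r)^2 + i^2 := by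
    rw [Complex.normSq_apply, hζre, hζim]; ring
  have h1 : (u:ℂ)/ζ - (b:ℂ)/ζ^2 = ((u:ℂ)*ζ - b)/ζ^2 := by
    field_simp
  rw [h1, Complex.sq_norm, map_div₀ Complex.normSq, map_pow, hnζ]
  have h2 : Complex.normSq ((u:ℂ)*ζ - b) = (u*(t-r)-b)^2 + u^2*i^2 := by
    rw [Complex.normSq_apply]
    simp [hζre, hζim]
    ring
  rw [h2]
  field_simp
  ring

/-- Lemma 3.2, relation (3.8). -/
theorem taylor_goldstein_relation_3_8
    (z₁ z₂ : ℝ) (hz : z₁ < z₂)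
    (g : ℝ) (hg : 0 < g)
    (U U' U'' : ℝ → ℝ)
    (hU : ∀ z ∈ Icc z₁ z₂, HasDerivAt U (U' z) z)
    (hU' : ∀ z ∈ Icc z₁ z₂, HasDerivAt U' (U'' z) z)
    (hU'' : ContinuousOn U'' (Icc z₁ z₂))
    (β : ℝ → ℝ) (hβc : ContinuousOn β (Icc z₁ z₂))
    (hβ : ∀ z ∈ Icc z₁ z₂, 0 ≤ β z)
    (α : ℝ) (hα : 0 < α)
    (c : ℂ) (hci : 0 < c.im)
    (w w' w'' : ℝ → ℂ)
    (hw : ∀ z ∈ Icc z₁ z₂, HasDerivAt w (w' z) z)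
    (hw' : ∀ z ∈ Icc z₁ z₂, HasDerivAt w' (w'' z) z)
    (hw'' : ContinuousOn w'' (Icc z₁ z₂))
    (hw0 : ∃ z ∈ Icc z₁ z₂, w z ≠ 0)
    (hbc₁ : w z₁ = 0) (hbc₂ : w z₂ = 0)
    (heq : ∀ z ∈ Icc z₁ z₂,
      w'' z - (α : ℂ) ^ 2 * w z - ((U'' z : ℂ) / ((U z : ℂ) - c)) * w z
        + ((g : ℂ) * (β z : ℂ) / ((U z : ℂ) - c) ^ 2) * w z = 0) :
    (∫ z in z₁..z₂,
        (‖w'' z‖ ^ 2 + 2 * α ^ 2 * ‖w' z‖ ^ 2 + α ^ 4 * ‖w z‖ ^ 2))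
      - (∫ z in z₁..z₂,
          (U'' z) ^ 2 / ((U z - c.re) ^ 2 + c.im ^ 2) * ‖w z‖ ^ 2)
      + 2 * (∫ z in z₁..z₂,
          g * β z * U'' z * (U z - c.re)
            / ((U z - c.re) ^ 2 + c.im ^ 2) ^ 2 * ‖w z‖ ^ 2)
      - (∫ z in z₁..z₂,
          g ^ 2 * (β z) ^ 2 / ((U z - c.re) ^ 2 + c.im ^ 2) ^ 2 * ‖w z‖ ^ 2)
      = 0 := by
  have hle : z₁ ≤ z₂ := hz.le
  have huIcc : uIcc z₁ z₂ = Icc z₁ z₂ := uIcc_of_le hle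
  have hci' : c.im ≠ 0 := ne_of_gt hci
  -- continuity facts
  have hUc : ContinuousOn U (Icc z₁ z₂) :=
    fun z hz' => (hU z hz').continuousAt.continuousWithinAt
  have hwc : ContinuousOn w (Icc z₁ z₂) :=
    fun z hz' => (hw z hz').continuousAt.continuousWithinAt
  have hw'c : ContinuousOn w' (Icc z₁ z₂) :=
    fun z hz' => (hw' z hz').continuousAt.continuousWithinAt
  set D : ℝ → ℝ := fun z => (U z - c.re)^2 + c.im^2 with hDdef
  have hDpos : ∀ z, 0 < D z := fun z => by positivity
  have hDc : ContinuousOn D (Icc z₁ z₂) := by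
    apply ContinuousOn.add
    · exact ((hUc.sub continuousOn_const).pow 2)
    · exact continuousOn_const
  have hnw : ContinuousOn (fun z => ‖w z‖^2) (Icc z₁ z₂) := (hwc.norm.pow 2)
  have hnw' : ContinuousOn (fun z => ‖w' z‖^2) (Icc z₁ z₂) := (hw'c.norm.pow 2)
  have hnw'' : ContinuousOn (fun z => ‖w'' z‖^2) (Icc z₁ z₂) := (hw''.norm.pow 2)
  -- integrands
  set f2 : ℝ → ℝ := fun z => (U'' z)^2 / D z * ‖w z‖^2 with hf2def
  set f3 : ℝ → ℝ := fun z => g * β z * U'' z * (U z - c.re) / (D z)^2 * ‖w z‖^2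
    with hf3def
  set f4 : ℝ → ℝ := fun z => g^2 * (β z)^2 / (D z)^2 * ‖w z‖^2 with hf4def
  have hf2c : ContinuousOn f2 (Icc z₁ z₂) :=
    (((hU''.pow 2).div hDc (fun z _ => (hDpos z).ne')).mul hnw)
  have hf3c : ContinuousOn f3 (Icc z₁ z₂) := by
    apply ContinuousOn.mul _ hnw
    exact (((continuousOn_const.mul hβc).mul hU'').mul
      (hUc.sub continuousOn_const)).div (hDc.pow 2)
      (fun z _ => (pow_ne_zero 2 (hDpos z).ne'))
  have hf4c : ContinuousOn f4 (Icc z₁ z₂) := by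
    apply ContinuousOn.mul _ hnw
    exact (continuousOn_const.mul (hβc.pow 2)).div (hDc.pow 2)
      (fun z _ => (pow_ne_zero 2 (hDpos z).ne'))
  have hI2 : IntervalIntegrable f2 MeasureTheory.volume z₁ z₂ :=
    (huIcc ▸ hf2c : ContinuousOn f2 (uIcc z₁ z₂)).intervalIntegrable
  have hI3 : IntervalIntegrable f3 MeasureTheory.volume z₁ z₂ :=
    (huIcc ▸ hf3c : ContinuousOn f3 (uIcc z₁ z₂)).intervalIntegrable
  have hI4 : IntervalIntegrable f4 MeasureTheory.volume z₁ z₂ :=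
    (huIcc ▸ hf4c : ContinuousOn f4 (uIcc z₁ z₂)).intervalIntegrable
  have hInw' : IntervalIntegrable (fun z => ‖w' z‖^2) MeasureTheory.volume z₁ z₂ :=
    (huIcc ▸ hnw' : ContinuousOn _ (uIcc z₁ z₂)).intervalIntegrable
  have hInw'' : IntervalIntegrable (fun z => ‖w'' z‖^2) MeasureTheory.volume z₁ z₂ :=
    (huIcc ▸ hnw'' : ContinuousOn _ (uIcc z₁ z₂)).intervalIntegrable
  have hInw : IntervalIntegrable (fun z => ‖w z‖^2) MeasureTheory.volume z₁ z₂ :=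
    (huIcc ▸ hnw : ContinuousOn _ (uIcc z₁ z₂)).intervalIntegrable
  -- the cross term r z = Re (w'' z * conj (w z))
  set r : ℝ → ℝ := fun z => (w'' z * (starRingEnd ℂ) (w z)).re with hrdef
  have hrc : ContinuousOn r (Icc z₁ z₂) := by
    apply Complex.continuous_re.comp_continuousOn
    exact hw''.mul (Complex.continuous_conj.comp_continuousOn hwc)
  have hIr : IntervalIntegrable r MeasureTheory.volume z₁ z₂ :=
    (huIcc ▸ hrc : ContinuousOn r (uIcc z₁ z₂)).intervalIntegrable
  -- integration by parts: ∫ r = - ∫ ‖w'‖²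
  have hibp : (∫ z in z₁..z₂, r z) = - ∫ z in z₁..z₂, ‖w' z‖^2 := by
    have hderiv : ∀ x ∈ uIcc z₁ z₂,
        HasDerivAt (fun z => (w' z * (starRingEnd ℂ) (w z)).re)
          (r x + ‖w' x‖^2) x := by
      intro x hx
      rw [huIcc] at hx
      have h1 : HasDerivAt (fun z => w' z * (starRingEnd ℂ) (w z))
          (w'' x * (starRingEnd ℂ) (w x) + w' x * (starRingEnd ℂ) (w' x)) x := by
        exact (hw' x hx).mul ((hw x hx).star)
      have h2 := (Complex.reCLM.hasFDerivAt.comp_hasDerivAt x h1)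
      have h3 : (Complex.reCLM : ℂ →L[ℝ] ℝ)
          (w'' x * (starRingEnd ℂ) (w x) + w' x * (starRingEnd ℂ) (w' x))
          = r x + ‖w' x‖^2 := by
        simp only [Complex.reCLM_apply, Complex.add_re, hrdef]
        congr 1
        rw [Complex.mul_conj]
        rw [Complex.sq_norm]
        simp
      rw [h3] at h2
      exact h2
    have hint : IntervalIntegrable (fun x => r x + ‖w' x‖^2)
        MeasureTheory.volume z₁ z₂ := hIr.add hInw'
    have := intervalIntegral.integral_eq_sub_of_hasDerivAt hderiv hint
    rw [hbc₁, hbc₂] at this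
    simp only [map_zero, mul_zero, Complex.zero_re, sub_zero] at this
    rw [intervalIntegral.integral_add hIr hInw'] at this
    linarith
  -- pointwise identity: ‖w'' - α²w‖² = f2 - 2 f3 + f4 on Icc
  have hpt : ∀ z ∈ Icc z₁ z₂,
      ‖w'' z - (α:ℂ)^2 * w z‖^2 = f2 z - 2 * f3 z + f4 z := by
    intro z hz'
    have hζ : ((U z : ℂ) - c) ≠ 0 := by
      intro h
      have := congrArg Complex.im h
      simp at this
      exact hci' this
    have hF : w'' z - (α:ℂ)^2 * w z
        = ((U'' z : ℂ) / ((U z : ℂ) - c)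
            - (g : ℂ) * (β z : ℂ) / ((U z : ℂ) - c)^2) * w z := by
      have h := heq z hz'
      ring_nf
      ring_nf at h
      linear_combination h
    rw [hF, norm_mul, mul_pow]
    have hre : ((U z : ℂ) - c).re = U z - c.re := by simp
    have him : ((U z : ℂ) - c).im = -c.im := by simp
    have hkey := normSq_helper (U z) (U'' z) (g * β z) c.re c.im hci'
      ((U z : ℂ) - c) hre him
    have hcast : ((g:ℂ) * (β z : ℂ)) = ((g * β z : ℝ) : ℂ) := by push_cast; ring
    rw [hcast] at *
    rw [hkey]
    simp only [hf2def, hf3def, hf4def, hDdef]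
    have hD0 : ((U z - c.re)^2 + c.im^2) ≠ 0 := (hDpos z).ne'
    field_simp
  -- expand ‖w'' - α²w‖² pointwise
  have hexp : ∀ z : ℝ, ‖w'' z - (α:ℂ)^2 * w z‖^2
      = ‖w'' z‖^2 + α^4 * ‖w z‖^2 - 2*α^2 * r z := by
    intro z
    rw [Complex.sq_norm, Complex.normSq_sub]
    rw [Complex.sq_norm, Complex.sq_norm]
    rw [Complex.normSq_mul]
    have h1 : Complex.normSq ((α:ℂ)^2) = α^4 := by
      rw [map_pow, Complex.normSq_ofReal]
      ring
    rw [h1]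
    have h2 : (w'' z * (starRingEnd ℂ) ((α:ℂ)^2 * w z)).re = α^2 * r z := by
      simp only [map_mul, hrdef]
      rw [show (starRingEnd ℂ) ((α:ℂ)^2) = (α:ℂ)^2 by
        rw [map_pow]; congr 1; exact Complex.conj_ofReal α]
      rw [show w'' z * ((α:ℂ)^2 * (starRingEnd ℂ) (w z))
          = (α:ℂ)^2 * (w'' z * (starRingEnd ℂ) (w z)) by ring]
      rw [show ((α:ℂ)^2) = ((α^2 : ℝ):ℂ) by push_cast; ring]
      rw [Complex.re_ofReal_mul]
    rw [h2]
    ring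
  -- now put things together
  have hmain : (∫ z in z₁..z₂, (‖w'' z‖^2 + α^4 * ‖w z‖^2 - 2*α^2 * r z))
      = ∫ z in z₁..z₂, (f2 z - 2 * f3 z + f4 z) := by
    apply intervalIntegral.integral_congr
    intro x hx
    rw [huIcc] at hx
    simp only
    rw [← hexp x, hpt x hx]
  have e1 : (∫ z in z₁..z₂, (‖w'' z‖^2 + α^4 * ‖w z‖^2 - 2*α^2 * r z))
      = (∫ z in z₁..z₂, ‖w'' z‖^2) + α^4 * (∫ z in z₁..z₂, ‖w z‖^2)
        - 2*α^2 * (∫ z in z₁..z₂, r z) := by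
    rw [intervalIntegral.integral_sub (hInw''.add (hInw.const_mul (α^4)))
        (hIr.const_mul (2*α^2)),
      intervalIntegral.integral_add hInw'' (hInw.const_mul (α^4)),
      intervalIntegral.integral_const_mul, intervalIntegral.integral_const_mul]
  have e2 : (∫ z in z₁..z₂, (f2 z - 2 * f3 z + f4 z))
      = (∫ z in z₁..z₂, f2 z) - 2 * (∫ z in z₁..z₂, f3 z)
        + (∫ z in z₁..z₂, f4 z) := by
    rw [intervalIntegral.integral_add ((hI2.sub (hI3.const_mul 2))) hI4,
      intervalIntegral.integral_sub hI2 (hI3.const_mul 2),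
      intervalIntegral.integral_const_mul]
  have e3 : (∫ z in z₁..z₂,
      (‖w'' z‖ ^ 2 + 2 * α ^ 2 * ‖w' z‖ ^ 2 + α ^ 4 * ‖w z‖ ^ 2))
      = (∫ z in z₁..z₂, ‖w'' z‖^2) + 2*α^2 * (∫ z in z₁..z₂, ‖w' z‖^2)
        + α^4 * (∫ z in z₁..z₂, ‖w z‖^2) := by
    rw [intervalIntegral.integral_add (hInw''.add (hInw'.const_mul (2*α^2)))
        (hInw.const_mul (α^4)),
      intervalIntegral.integral_add hInw'' (hInw'.const_mul (2*α^2)),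
      intervalIntegral.integral_const_mul, intervalIntegral.integral_const_mul]
  have hEq2 : (∫ z in z₁..z₂,
      (U'' z) ^ 2 / ((U z - c.re) ^ 2 + c.im ^ 2) * ‖w z‖ ^ 2)
      = ∫ z in z₁..z₂, f2 z := rfl
  have hEq3 : (∫ z in z₁..z₂,
      g * β z * U'' z * (U z - c.re)
        / ((U z - c.re) ^ 2 + c.im ^ 2) ^ 2 * ‖w z‖ ^ 2)
      = ∫ z in z₁..z₂, f3 z := rfl
  have hEq4 : (∫ z in z₁..z₂,
      g ^ 2 * (β z) ^ 2 / ((U z - c.re) ^ 2 + c.im ^ 2) ^ 2 * ‖w z‖ ^ 2)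
      = ∫ z in z₁..z₂, f4 z := rfl
  rw [hEq2, hEq3, hEq4, e3]
  rw [e1, e2, hibp] at hmain
  linarith
end

section
/- Suppose w is twice continuously differentiable on [z₁, z₂], not identically zero, satisfies w(z₁) = w(z₂) = 0, c_i > 0, and the (buoyancy-truncated) integral relation ∫_{z₁}^{z₂} (|w″|² + 2α²|w′|² + α⁴|w|²) dz − ∫_{z₁}^{z₂} (U″)²/((U − c_r)² + c_i²) |w|² dz + 2 ∫_{z₁}^{z₂} gβ U″ (U − c_r)/((U − c_r)² + c_i²)² |w|² dz = 0 holds, which is relation (3.8) of the paper with the second-order term g²β² neglected. Then the growth-rate inequality α³ c_i³ ≤ M² c_i / α + N / α holds, where M² is the maximum of (U″)² over [z₁, z₂] and N is the maximum of gβ|U″| over [z₁, z₂] (inequality (3.22); the main theorem). -/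
open Set

set_option maxHeartbeats 1000000 in
/-- Inequality (3.22), the main theorem: the growth-rate bound
`α³c_i³ ≤ M²c_i/α + N/α`. -/
theorem taylor_goldstein_growth_rate_bound
    (z₁ z₂ : ℝ) (hz : z₁ < z₂)
    (g : ℝ) (hg : 0 < g)
    (U U' U'' : ℝ → ℝ)
    (hU : ∀ z ∈ Icc z₁ z₂, HasDerivAt U (U' z) z)
    (hU' : ∀ z ∈ Icc z₁ z₂, HasDerivAt U' (U'' z) z)
    (hU'' : ContinuousOn U'' (Icc z₁ z₂))
    (β : ℝ → ℝ) (hβc : ContinuousOn β (Icc z₁ z₂))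
    (hβ : ∀ z ∈ Icc z₁ z₂, 0 ≤ β z)
    (α : ℝ) (hα : 0 < α)
    (c : ℂ) (hci : 0 < c.im)
    (w w' w'' : ℝ → ℂ)
    (hw : ∀ z ∈ Icc z₁ z₂, HasDerivAt w (w' z) z)
    (hw' : ∀ z ∈ Icc z₁ z₂, HasDerivAt w' (w'' z) z)
    (hw'' : ContinuousOn w'' (Icc z₁ z₂))
    (hw0 : ∃ z ∈ Icc z₁ z₂, w z ≠ 0)
    (hbc₁ : w z₁ = 0) (hbc₂ : w z₂ = 0)
    (M2 : ℝ)
    (hM2 : IsGreatest ((fun z => (U'' z) ^ 2) '' Icc z₁ z₂) M2)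
    (hrel : (∫ z in z₁..z₂,
        (‖w'' z‖ ^ 2 + 2 * α ^ 2 * ‖w' z‖ ^ 2 + α ^ 4 * ‖w z‖ ^ 2))
      - (∫ z in z₁..z₂,
          (U'' z) ^ 2 / ((U z - c.re) ^ 2 + c.im ^ 2) * ‖w z‖ ^ 2)
      + 2 * (∫ z in z₁..z₂,
          g * β z * U'' z * (U z - c.re)
            / ((U z - c.re) ^ 2 + c.im ^ 2) ^ 2 * ‖w z‖ ^ 2)
      = 0)
    (N : ℝ)
    (hN : IsGreatest ((fun z => g * β z * |U'' z|) '' Icc z₁ z₂) N) :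
    α ^ 3 * c.im ^ 3 ≤ M2 * c.im / α + N / α := by

  have hab : z₁ ≤ z₂ := hz.le
  set ci := c.im with hcidef
  have hci2 : (0:ℝ) < ci ^ 2 := by positivity
  have hci3 : (0:ℝ) < ci ^ 3 := by positivity
  -- continuity facts
  have hUc : ContinuousOn U (Icc z₁ z₂) :=
    fun z hz' => (hU z hz').continuousAt.continuousWithinAt
  have hwc : ContinuousOn w (Icc z₁ z₂) :=
    fun z hz' => (hw z hz').continuousAt.continuousWithinAt
  have hw'c : ContinuousOn w' (Icc z₁ z₂) :=
    fun z hz' => (hw' z hz').continuousAt.continuousWithinAt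
  set f0 : ℝ → ℝ := fun z => ‖w z‖ ^ 2 with hf0
  have hf0c : ContinuousOn f0 (Icc z₁ z₂) := (hwc.norm).pow 2
  have hf0nn : ∀ z, 0 ≤ f0 z := fun z => by positivity
  set Q : ℝ → ℝ := fun z => (U z - c.re) ^ 2 + ci ^ 2 with hQ
  have hQpos : ∀ z ∈ Icc z₁ z₂, 0 < Q z := fun z _ => by positivity
  have hQge : ∀ z ∈ Icc z₁ z₂, ci ^ 2 ≤ Q z := fun z _ => by
    simp only [hQ]; nlinarith [sq_nonneg (U z - c.re)]
  have hQc : ContinuousOn Q (Icc z₁ z₂) :=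
    ((hUc.sub continuousOn_const).pow 2).add continuousOn_const
  -- the three integrands
  set f1 : ℝ → ℝ := fun z => ‖w'' z‖ ^ 2 + 2 * α ^ 2 * ‖w' z‖ ^ 2 + α ^ 4 * ‖w z‖ ^ 2 with hf1
  set f2 : ℝ → ℝ := fun z => (U'' z) ^ 2 / Q z * ‖w z‖ ^ 2 with hf2
  set f3 : ℝ → ℝ := fun z => g * β z * U'' z * (U z - c.re) / (Q z) ^ 2 * ‖w z‖ ^ 2 with hf3
  have hf1c : ContinuousOn f1 (Icc z₁ z₂) :=
    (((hw''.norm.pow 2).add ((continuousOn_const).mul (hw'c.norm.pow 2))).add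
      ((continuousOn_const).mul (hwc.norm.pow 2)))
  have hf2c : ContinuousOn f2 (Icc z₁ z₂) :=
    (((hU''.pow 2).div hQc (fun z hz' => (hQpos z hz').ne')).mul (hwc.norm.pow 2))
  have hf3c : ContinuousOn f3 (Icc z₁ z₂) := by
    refine ContinuousOn.mul (ContinuousOn.div ?_ (hQc.pow 2)
      (fun z hz' => by positivity)) (hwc.norm.pow 2)
    exact ((continuousOn_const.mul hβc).mul hU'').mul (hUc.sub continuousOn_const)
  have hf1i : IntervalIntegrable f1 MeasureTheory.volume z₁ z₂ :=
    hf1c.intervalIntegrable_of_Icc hab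
  have hf2i : IntervalIntegrable f2 MeasureTheory.volume z₁ z₂ :=
    hf2c.intervalIntegrable_of_Icc hab
  have hf3i : IntervalIntegrable f3 MeasureTheory.volume z₁ z₂ :=
    hf3c.intervalIntegrable_of_Icc hab
  have hf0i : IntervalIntegrable f0 MeasureTheory.volume z₁ z₂ :=
    hf0c.intervalIntegrable_of_Icc hab
  -- S = ∫ ‖w‖² > 0
  set S : ℝ := ∫ z in z₁..z₂, f0 z with hS
  have hSpos : 0 < S := by
    obtain ⟨z₀, hz₀, hwz₀⟩ := hw0
    refine intervalIntegral.integral_pos hz hf0c (fun x _ => hf0nn x) ⟨z₀, hz₀, ?_⟩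
    have : (0:ℝ) < ‖w z₀‖ := by simpa [norm_pos_iff] using hwz₀
    positivity
  -- bounds
  have hNnn : 0 ≤ N := by
    obtain ⟨z₀, hz₀, he⟩ := hN.1
    calc (0:ℝ) ≤ g * β z₀ * |U'' z₀| :=
          mul_nonneg (mul_nonneg hg.le (hβ z₀ hz₀)) (abs_nonneg _)
      _ = N := he
  have hM2nn : 0 ≤ M2 := by
    obtain ⟨z₀, hz₀, he⟩ := hM2.1
    calc (0:ℝ) ≤ (U'' z₀) ^ 2 := sq_nonneg _
      _ = M2 := he
  -- ∫ f1 = ∫ f2 - 2 ∫ f3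
  have hrel' : (∫ z in z₁..z₂, f1 z) = (∫ z in z₁..z₂, f2 z) - 2 * ∫ z in z₁..z₂, f3 z := by
    simp only [hf1, hf2, hf3, hQ] at hrel ⊢
    linarith
  -- α⁴ S ≤ ∫ f1
  have h1 : α ^ 4 * S ≤ ∫ z in z₁..z₂, f1 z := by
    rw [hS, ← intervalIntegral.integral_const_mul]
    refine intervalIntegral.integral_mono_on hab ((hf0c.const_smul (α^4)).intervalIntegrable_of_Icc hab) hf1i ?_
    intro x hx
    simp only [hf1, hf0]
    nlinarith [norm_nonneg (w'' x), norm_nonneg (w' x), sq_nonneg α]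
  -- ∫ f2 ≤ (M2/ci²) S
  have h2 : (∫ z in z₁..z₂, f2 z) ≤ M2 / ci ^ 2 * S := by
    rw [hS, ← intervalIntegral.integral_const_mul]
    refine intervalIntegral.integral_mono_on hab hf2i ((hf0c.const_smul (M2 / ci^2)).intervalIntegrable_of_Icc hab) ?_
    intro x hx
    have hU2 : (U'' x) ^ 2 ≤ M2 := hM2.2 ⟨x, hx, rfl⟩
    have hQg := hQge x hx
    have hdiv : (U'' x) ^ 2 / Q x ≤ M2 / ci ^ 2 := div_le_div₀ hM2nn hU2 hci2 hQg
    calc (U'' x) ^ 2 / Q x * ‖w x‖ ^ 2 ≤ M2 / ci ^ 2 * ‖w x‖ ^ 2 := by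
          exact mul_le_mul_of_nonneg_right hdiv (hf0nn x)
      _ = M2 / ci ^ 2 * f0 x := rfl
  -- -2 ∫ f3 ≤ (N/ci³) S
  have h3' : (∫ z in z₁..z₂, (-2 : ℝ) * f3 z) ≤ ∫ z in z₁..z₂, N / ci ^ 3 * f0 z := by
    refine intervalIntegral.integral_mono_on hab (hf3i.const_mul (-2)) ((hf0c.const_smul (N / ci^3)).intervalIntegrable_of_Icc hab) ?_
    intro x hx
    have hbN : g * β x * |U'' x| ≤ N := hN.2 ⟨x, hx, rfl⟩
    have hβx : 0 ≤ g * β x := mul_nonneg hg.le (hβ x hx)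
    set b : ℝ := g * β x * U'' x with hb
    set t : ℝ := U x - c.re with ht
    have habs : |b| ≤ N := by
      rw [hb, abs_mul, abs_of_nonneg hβx]; exact hbN
    have hkey : (-2 : ℝ) * (b * t / (Q x) ^ 2) ≤ N / ci ^ 3 := by
      have hQx : Q x = t ^ 2 + ci ^ 2 := rfl
      have ht2 : (0:ℝ) < t ^ 2 + ci ^ 2 := by nlinarith [sq_nonneg t]
      have heq : (-2:ℝ) * (b * t / (Q x) ^ 2) = (-2 * (b * t)) / (t ^ 2 + ci ^ 2) ^ 2 := by
        rw [hQx]; ring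
      rw [heq, div_le_div_iff₀ (pow_pos ht2 2) hci3]
      have h1 : -(b * t) ≤ N * |t| := by
        calc -(b * t) ≤ |b * t| := neg_le_abs _
          _ = |b| * |t| := abs_mul _ _
          _ ≤ N * |t| := mul_le_mul_of_nonneg_right habs (abs_nonneg t)
      have h2 : 2 * |t| * ci ≤ t ^ 2 + ci ^ 2 := by
        nlinarith [sq_nonneg (|t| - ci), sq_abs t]
      have e1 : -2 * (b * t) * ci ^ 3 ≤ 2 * (N * |t|) * ci ^ 3 := by
        nlinarith [mul_le_mul_of_nonneg_right h1 hci3.le]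
      have e2 : 2 * (N * |t|) * ci ^ 3 ≤ N * (t ^ 2 + ci ^ 2) * ci ^ 2 := by
        nlinarith [mul_le_mul_of_nonneg_right (mul_le_mul_of_nonneg_left h2 hNnn) hci2.le]
      have e3 : N * (t ^ 2 + ci ^ 2) * ci ^ 2 ≤ N * (t ^ 2 + ci ^ 2) ^ 2 := by
        have hle : ci ^ 2 ≤ t ^ 2 + ci ^ 2 := by nlinarith [sq_nonneg t]
        nlinarith [mul_le_mul_of_nonneg_left hle (mul_nonneg hNnn ht2.le)]
      linarith [e1, e2, e3]
    calc (-2 : ℝ) * f3 x = (-2 : ℝ) * (b * t / (Q x) ^ 2) * ‖w x‖ ^ 2 := by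
          simp only [hf3]; ring
      _ ≤ N / ci ^ 3 * ‖w x‖ ^ 2 := mul_le_mul_of_nonneg_right hkey (by positivity)
      _ = N / ci ^ 3 * f0 x := rfl
  have h3 : -(2 * ∫ z in z₁..z₂, f3 z) ≤ N / ci ^ 3 * S := by
    rw [hS]
    calc -(2 * ∫ z in z₁..z₂, f3 z) = ∫ z in z₁..z₂, (-2 : ℝ) * f3 z := by
          rw [intervalIntegral.integral_const_mul]; ring
      _ ≤ ∫ z in z₁..z₂, N / ci ^ 3 * f0 z := h3'
      _ = N / ci ^ 3 * ∫ z in z₁..z₂, f0 z := intervalIntegral.integral_const_mul _ _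
  -- combine
  have hmain : α ^ 4 * S ≤ (M2 / ci ^ 2 + N / ci ^ 3) * S := by
    calc α ^ 4 * S ≤ ∫ z in z₁..z₂, f1 z := h1
      _ = (∫ z in z₁..z₂, f2 z) - 2 * ∫ z in z₁..z₂, f3 z := hrel'
      _ ≤ M2 / ci ^ 2 * S + N / ci ^ 3 * S := by linarith
      _ = (M2 / ci ^ 2 + N / ci ^ 3) * S := by ring
  have h4 : α ^ 4 ≤ M2 / ci ^ 2 + N / ci ^ 3 := le_of_mul_le_mul_right
    (by linarith [hmain]) hSpos
  have h5 : α ^ 4 * ci ^ 3 ≤ M2 * ci + N := by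
    have := mul_le_mul_of_nonneg_right h4 hci3.le
    calc α ^ 4 * ci ^ 3 ≤ (M2 / ci ^ 2 + N / ci ^ 3) * ci ^ 3 := this
      _ = M2 * ci + N := by field_simp
  rw [← add_div, le_div_iff₀ hα]
  nlinarith [h5]
end

section
/- (Homogeneous special case β = 0, recovering the result of Banerjee et al.) If (w, c, α²) is a non-trivial solution of the Rayleigh eigenvalue problem w″ − α²w − (U″/(U − c))w = 0 on [z₁, z₂] with w(z₁) = w(z₂) = 0 and c_i > 0, then α⁴ c_i² ≤ M², where M² is the maximum of (U″)² over [z₁, z₂]; in particular α c_i ≤ M/α, so the growth rate α c_i of an unstable mode tends to 0 as α → ∞. -/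
set_option maxHeartbeats 1000000
open Set Filter

lemma second_deriv_nonpos_at_max {f f' : ℝ → ℝ} {a b x f''x : ℝ}
    (hx : x ∈ Ioo a b)
    (hmax : ∀ y ∈ Icc a b, f y ≤ f x)
    (hf : ∀ y ∈ Icc a b, HasDerivAt f (f' y) y)
    (hf' : HasDerivAt f' f''x x) : f''x ≤ 0 := by
  by_contra hpos
  push_neg at hpos
  have hxI : x ∈ Icc a b := Ioo_subset_Icc_self hx
  have hmem : Icc a b ∈ nhds x := Icc_mem_nhds hx.1 hx.2
  have hloc : IsLocalMax f x := by
    filter_upwards [hmem] with y hy using hmax y hy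
  have hf'x : f' x = 0 := hloc.hasDerivAt_eq_zero (hf x hxI)
  have hslope : Tendsto (slope f' x) (nhdsWithin x {x}ᶜ) (nhds f''x) :=
    hasDerivAt_iff_tendsto_slope.1 hf'
  have hev : ∀ᶠ y in nhdsWithin x (Ioi x), 0 < slope f' x y := by
    have := hslope.eventually (eventually_gt_nhds hpos)
    exact this.filter_mono (nhdsWithin_mono x fun y (hy : y ∈ Ioi x) => (show y ∈ {x}ᶜ from ne_of_gt hy))
  rw [eventually_nhdsWithin_iff] at hev
  obtain ⟨s, hs, hsopen, hxs⟩ := eventually_nhds_iff.mp hev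
  obtain ⟨ε, hε, hball⟩ := Metric.isOpen_iff.mp hsopen x hxs
  set t := min (x + ε/2) ((x + b)/2) with ht
  have hxt : x < t := by
    apply lt_min <;> [linarith; linarith [hx.2]]
  have htb : t < b := min_lt_of_right_lt (by linarith [hx.2])
  have hsubI : Ioo x t ⊆ Ioo x (x + ε/2) := Ioo_subset_Ioo_right (min_le_left _ _)
  have hIccsub : Icc x t ⊆ Icc a b := Icc_subset_Icc hxI.1 (le_of_lt htb)
  have hpos' : ∀ y ∈ Ioo x t, 0 < f' y := by
    intro y hy
    have hyx : 0 < y - x := by linarith [hy.1]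
    have hyball : y ∈ s := by
      apply hball
      have h2 := hsubI hy
      simp only [Metric.mem_ball, Real.dist_eq, abs_sub_lt_iff]
      constructor <;> linarith [h2.1, h2.2]
    have hsl : 0 < slope f' x y := hs y hyball hy.1
    rw [slope_def_field, hf'x, sub_zero] at hsl
    rcases div_pos_iff.mp hsl with ⟨h1, _⟩ | ⟨_, h2⟩
    · exact h1
    · linarith
  have hmono : StrictMonoOn f (Icc x t) := by
    apply strictMonoOn_of_hasDerivWithinAt_pos (convex_Icc x t)
      (fun y hy => (hf y (hIccsub hy)).continuousAt.continuousWithinAt)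
      (f' := f')
    · intro y hy
      rw [interior_Icc] at hy
      exact (hf y (hIccsub (Ioo_subset_Icc_self hy))).hasDerivWithinAt
    · intro y hy
      rw [interior_Icc] at hy
      exact hpos' y hy
  have : f x < f t := hmono (left_mem_Icc.mpr hxt.le) (right_mem_Icc.mpr hxt.le) hxt
  exact absurd (hmax t (hIccsub (right_mem_Icc.mpr hxt.le))) (not_le.mpr this)

/-- Homogeneous special case `β = 0` (result of Banerjee et al.): for an unstable mode
of the Rayleigh eigenvalue problem, `α⁴c_i² ≤ M²`, and in particular `αc_i ≤ M/α`
where `M = √(M²)`, so that the growth rate `αc_i` tends to `0` as `α → ∞`. -/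
theorem rayleigh_growth_rate_bound
    (z₁ z₂ : ℝ) (hz : z₁ < z₂)
    (U U' U'' : ℝ → ℝ)
    (hU : ∀ z ∈ Icc z₁ z₂, HasDerivAt U (U' z) z)
    (hU' : ∀ z ∈ Icc z₁ z₂, HasDerivAt U' (U'' z) z)
    (hU'' : ContinuousOn U'' (Icc z₁ z₂))
    (α : ℝ) (hα : 0 < α)
    (c : ℂ) (hci : 0 < c.im)
    (w w' w'' : ℝ → ℂ)
    (hw : ∀ z ∈ Icc z₁ z₂, HasDerivAt w (w' z) z)
    (hw' : ∀ z ∈ Icc z₁ z₂, HasDerivAt w' (w'' z) z)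
    (hw'' : ContinuousOn w'' (Icc z₁ z₂))
    (hw0 : ∃ z ∈ Icc z₁ z₂, w z ≠ 0)
    (hbc₁ : w z₁ = 0) (hbc₂ : w z₂ = 0)
    (heq : ∀ z ∈ Icc z₁ z₂,
      w'' z - (α : ℂ) ^ 2 * w z - ((U'' z : ℂ) / ((U z : ℂ) - c)) * w z = 0)
    (M2 : ℝ)
    (hM2 : IsGreatest ((fun z => (U'' z) ^ 2) '' Icc z₁ z₂) M2) :
    α ^ 4 * c.im ^ 2 ≤ M2 ∧ α * c.im ≤ Real.sqrt M2 / α := by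
  -- the modulus-squared function and its derivatives
  set φ : ℝ → ℝ := fun z => (w z).re ^ 2 + (w z).im ^ 2 with hφdef
  set φ' : ℝ → ℝ := fun z => 2 * ((w z).re * (w' z).re + (w z).im * (w' z).im) with hφ'def
  have hre : ∀ z ∈ Icc z₁ z₂, HasDerivAt (fun y => (w y).re) ((w' z).re) z := fun z hz' =>
    Complex.reCLM.hasFDerivAt.comp_hasDerivAt z (hw z hz')
  have him : ∀ z ∈ Icc z₁ z₂, HasDerivAt (fun y => (w y).im) ((w' z).im) z := fun z hz' =>
    Complex.imCLM.hasFDerivAt.comp_hasDerivAt z (hw z hz')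
  have hre' : ∀ z ∈ Icc z₁ z₂, HasDerivAt (fun y => (w' y).re) ((w'' z).re) z := fun z hz' =>
    Complex.reCLM.hasFDerivAt.comp_hasDerivAt z (hw' z hz')
  have him' : ∀ z ∈ Icc z₁ z₂, HasDerivAt (fun y => (w' y).im) ((w'' z).im) z := fun z hz' =>
    Complex.imCLM.hasFDerivAt.comp_hasDerivAt z (hw' z hz')
  have hφ : ∀ z ∈ Icc z₁ z₂, HasDerivAt φ (φ' z) z := by
    intro z hz'
    have := ((hre z hz').mul (hre z hz')).add ((him z hz').mul (him z hz'))
    convert this using 1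
    · rfl
    · rfl
    · funext y; simp [hφdef, sq]
    · simp [hφ'def]; ring
  -- maximum point
  have hwc : ContinuousOn w (Icc z₁ z₂) := fun z hz' => (hw z hz').continuousAt.continuousWithinAt
  have hφc : ContinuousOn φ (Icc z₁ z₂) := by
    apply ContinuousOn.add
    · exact ((Complex.continuous_re.comp_continuousOn hwc).pow 2)
    · exact ((Complex.continuous_im.comp_continuousOn hwc).pow 2)
  obtain ⟨z₀, hz₀I, hz₀max⟩ := isCompact_Icc.exists_isMaxOn (nonempty_Icc.mpr hz.le) hφc
  have hmax : ∀ y ∈ Icc z₁ z₂, φ y ≤ φ z₀ := fun y hy => hz₀max hy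
  obtain ⟨zs, hzsI, hzs⟩ := hw0
  have hφzs : 0 < φ zs := by
    have := Complex.normSq_pos.mpr hzs
    simpa [hφdef, Complex.normSq_apply, sq] using this
  have hφz₀ : 0 < φ z₀ := lt_of_lt_of_le hφzs (hmax zs hzsI)
  have hz₀Ioo : z₀ ∈ Ioo z₁ z₂ := by
    rcases eq_or_lt_of_le hz₀I.1 with h | h
    · exfalso; rw [show z₀ = z₁ from h.symm] at hφz₀; simp [hφdef, hbc₁] at hφz₀
    rcases eq_or_lt_of_le hz₀I.2 with h2 | h2
    · exfalso; rw [h2] at hφz₀; simp [hφdef, hbc₂] at hφz₀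
    exact ⟨h, h2⟩
  -- second derivative at z₀
  set D : ℝ := 2 * (((w' z₀).re ^ 2 + (w' z₀).im ^ 2) +
      ((w z₀).re * (w'' z₀).re + (w z₀).im * (w'' z₀).im)) with hDdef
  have hφ'' : HasDerivAt φ' D z₀ := by
    have h1 := (((hre z₀ hz₀I).mul (hre' z₀ hz₀I)).add
      ((him z₀ hz₀I).mul (him' z₀ hz₀I))).const_mul (2 : ℝ)
    convert h1 using 1
    · rfl
    · rfl
    · rfl
    simp [hDdef]; ring
  have hD : D ≤ 0 := second_deriv_nonpos_at_max hz₀Ioo hmax hφ hφ''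
  -- express w'' via the equation
  set k : ℂ := (α : ℂ) ^ 2 + (U'' z₀ : ℂ) / ((U z₀ : ℂ) - c) with hkdef
  have hww : w'' z₀ = k * w z₀ := by
    have := heq z₀ hz₀I
    rw [hkdef]; ring_nf; ring_nf at this; linear_combination this
  have hkre : (w z₀).re * (w'' z₀).re + (w z₀).im * (w'' z₀).im = k.re * φ z₀ := by
    rw [hww]
    simp [hφdef, Complex.mul_re, Complex.mul_im]
    ring
  have hkre_nonpos : k.re ≤ 0 := by
    have h1 : k.re * φ z₀ ≤ 0 := by
      rw [← hkre]
      nlinarith [sq_nonneg (w' z₀).re, sq_nonneg (w' z₀).im]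
    by_contra h
    push_neg at h
    nlinarith
  -- compute k.re
  set d : ℝ := U z₀ - c.re with hddef
  have hN : 0 < d ^ 2 + c.im ^ 2 := by positivity
  have hkre_eq : k.re = α ^ 2 + U'' z₀ * d / (d ^ 2 + c.im ^ 2) := by
    rw [hkdef]
    simp only [Complex.add_re, Complex.div_re, Complex.normSq_apply, Complex.sub_re,
      Complex.sub_im, Complex.ofReal_re, Complex.ofReal_im, hddef, Complex.mul_re,
      Complex.mul_im, pow_two]
    ring
  -- the key bound
  have hUbd : |U'' z₀| ≤ Real.sqrt M2 := by
    have h1 : (U'' z₀) ^ 2 ≤ M2 := hM2.2 ⟨z₀, hz₀I, rfl⟩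
    have := Real.sqrt_le_sqrt h1
    rwa [Real.sqrt_sq_eq_abs] at this
  have hM2nn : 0 ≤ M2 := le_trans (sq_nonneg _) (hM2.2 ⟨z₀, hz₀I, rfl⟩)
  have hdbd : |d| * (2 * c.im) ≤ d ^ 2 + c.im ^ 2 := by
    nlinarith [sq_nonneg (|d| - c.im), sq_abs d]
  have hkey : 2 * (α ^ 2 * c.im) ≤ Real.sqrt M2 := by
    rw [hkre_eq] at hkre_nonpos
    have h2 : U'' z₀ * d ≤ -(α ^ 2) * (d ^ 2 + c.im ^ 2) :=
      (div_le_iff₀ hN).mp (by linarith : U'' z₀ * d / (d ^ 2 + c.im ^ 2) ≤ -(α ^ 2))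
    have h3 : -(U'' z₀ * d) ≤ |U'' z₀| * |d| := by
      calc -(U'' z₀ * d) ≤ |U'' z₀ * d| := neg_le_abs _
        _ = |U'' z₀| * |d| := abs_mul _ _
    have h4 : α ^ 2 * (d ^ 2 + c.im ^ 2) ≤ |U'' z₀| * |d| := by
      nlinarith
    have h5 : α ^ 2 * (|d| * (2 * c.im)) ≤ |U'' z₀| * |d| := by
      nlinarith [sq_nonneg α]
    rcases eq_or_ne d 0 with hd | hd
    · exfalso
      rw [hd] at h4
      simp at h4
      nlinarith [mul_pos (mul_pos hα hα) (mul_pos hci hci)]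
    · have hdpos : 0 < |d| := abs_pos.mpr hd
      have h6 : α ^ 2 * (2 * c.im) ≤ |U'' z₀| :=
        le_of_mul_le_mul_right (by calc α ^ 2 * (2 * c.im) * |d| = α ^ 2 * (|d| * (2 * c.im)) := by ring
          _ ≤ |U'' z₀| * |d| := h5) hdpos
      calc 2 * (α ^ 2 * c.im) = α ^ 2 * (2 * c.im) := by ring
        _ ≤ |U'' z₀| := h6
        _ ≤ Real.sqrt M2 := hUbd
  constructor
  · nlinarith [hkey, Real.sq_sqrt hM2nn, mul_nonneg (sq_nonneg α) hci.le, sq_nonneg (α ^ 2 * c.im)]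
  · rw [le_div_iff₀ hα]
    nlinarith [hkey, mul_nonneg (mul_nonneg hα.le hci.le) hα.le]
end
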